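/- Let Ω = (-1,1)^m ⊆ ℝ^m (m ≥ 1) and let ρ_n : Ω → ℝ^m be continuously differentiable maps and ρ : Ω → ℝ^m a continuously differentiable map such that: (i) ρ_n → ρ uniformly on Ω and Dρ_n → Dρ uniformly on Ω (in operator norm); (ii) there are subsets P_n ⊆ Ω with sup_{p ∈ P_n} ‖Dρ_n(p) − id‖ → 0, and every point of Ω is the limit of a sequence of points p_n ∈ P_n; (iii) there are points y_n ∈ Ω with ρ_n(y_n) = y_n and y_n → y₀ ∈ Ω. Then ρ(y) = y for all y ∈ Ω. -/

import Mathlib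

open Filter

/-- Analytic core of the Main Theorem. If `ρ_n → ρ` and `Dρ_n → Dρ`
uniformly on the open cube `Ω = (-1,1)^m`, the Jacobians `Dρ_n` tend to the identity
uniformly on the sampling grids `P_n` (which fill `Ω` in the limit), and `ρ_n` has fixed
points `y_n → y₀ ∈ Ω`, then `ρ` is the identity on `Ω`. -/
theorem stmt_7 (m : ℕ) (hm : 1 ≤ m)
    (Ω : Set (Fin m → ℝ)) (hΩ : Ω = Set.pi Set.univ fun _ : Fin m => Set.Ioo (-1 : ℝ) 1)
    (ρ : ℕ → (Fin m → ℝ) → (Fin m → ℝ)) (ρlim : (Fin m → ℝ) → (Fin m → ℝ))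
    (hC1 : ∀ n, ContDiffOn ℝ 1 (ρ n) Ω) (hC1lim : ContDiffOn ℝ 1 ρlim Ω)
    (hunif : TendstoUniformlyOn ρ ρlim atTop Ω)
    (hdunif : TendstoUniformlyOn (fun n x => fderiv ℝ (ρ n) x)
      (fun x => fderiv ℝ ρlim x) atTop Ω)
    (P : ℕ → Set (Fin m → ℝ)) (hPΩ : ∀ n, P n ⊆ Ω)
    (hjac : ∀ ε > 0, ∃ N : ℕ, ∀ n ≥ N, ∀ p ∈ P n,
      ‖fderiv ℝ (ρ n) p - ContinuousLinearMap.id ℝ (Fin m → ℝ)‖ < ε)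
    (hdense : ∀ x ∈ Ω, ∃ p : ℕ → (Fin m → ℝ),
      (∀ n, p n ∈ P n) ∧ Tendsto p atTop (nhds x))
    (y : ℕ → (Fin m → ℝ)) (hy : ∀ n, y n ∈ Ω) (hfix : ∀ n, ρ n (y n) = y n)
    (y₀ : Fin m → ℝ) (hy₀ : y₀ ∈ Ω) (hylim : Tendsto y atTop (nhds y₀)) :
    ∀ z ∈ Ω, ρlim z = z := by
  have hopen : IsOpen Ω := by
    rw [hΩ]
    exact isOpen_set_pi Set.finite_univ fun i _ => isOpen_Ioo
  have hconv : Convex ℝ Ω := by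
    rw [hΩ]
    exact convex_pi fun i _ => convex_Ioo _ _
  have hdiff : DifferentiableOn ℝ ρlim Ω := hC1lim.differentiableOn one_ne_zero
  have hcontd : ContinuousOn (fun x => fderiv ℝ ρlim x) Ω :=
    hC1lim.continuousOn_fderiv_of_isOpen hopen le_rfl
  -- fderiv ρlim = id on Ω
  have hId : ∀ x ∈ Ω, fderiv ℝ ρlim x = ContinuousLinearMap.id ℝ (Fin m → ℝ) := by
    intro x hx
    obtain ⟨p, hpP, hpx⟩ := hdense x hx
    have hpΩ : ∀ n, p n ∈ Ω := fun n => hPΩ n (hpP n)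
    have hA : Tendsto (fun n => fderiv ℝ (ρ n) (p n)) atTop
        (nhds (ContinuousLinearMap.id ℝ (Fin m → ℝ))) := by
      rw [Metric.tendsto_atTop]
      intro ε hε
      obtain ⟨N, hN⟩ := hjac ε hε
      exact ⟨N, fun n hn => by
        rw [dist_eq_norm]; exact hN n hn (p n) (hpP n)⟩
    have hpx' : Tendsto p atTop (nhdsWithin x Ω) := by
      rw [tendsto_nhdsWithin_iff]
      exact ⟨hpx, Eventually.of_forall hpΩ⟩
    have hB1 : Tendsto (fun n => fderiv ℝ ρlim (p n)) atTop (nhds (fderiv ℝ ρlim x)) :=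
      ((hcontd x hx).tendsto).comp hpx'
    have hB2 : Tendsto (fun n => fderiv ℝ (ρ n) (p n) - fderiv ℝ ρlim (p n)) atTop
        (nhds 0) := by
      rw [Metric.tendsto_atTop]
      intro ε hε
      have h := Metric.tendstoUniformlyOn_iff.mp hdunif ε hε
      rw [eventually_atTop] at h
      obtain ⟨N, hN⟩ := h
      refine ⟨N, fun n hn => ?_⟩
      have h2 := hN n hn (p n) (hpΩ n)
      rw [dist_eq_norm] at h2 ⊢
      simpa [norm_sub_rev] using h2
    have hB : Tendsto (fun n => fderiv ℝ (ρ n) (p n)) atTop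
        (nhds (fderiv ℝ ρlim x)) := by
      have := hB2.add hB1
      simpa using this
    exact tendsto_nhds_unique hB hA
  -- ρlim y₀ = y₀
  have hfix0 : ρlim y₀ = y₀ := by
    have h1 : Tendsto (fun n => ρ n (y n)) atTop (nhds (ρlim y₀)) :=
      hunif.tendsto_comp (hC1lim.continuousOn.continuousWithinAt hy₀)
        (tendsto_nhdsWithin_iff.mpr ⟨hylim, Eventually.of_forall hy⟩)
    have h2 : Tendsto (fun n => ρ n (y n)) atTop (nhds y₀) := by
      simpa [hfix] using hylim
    exact tendsto_nhds_unique h1 h2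
  -- constancy of ρlim - id
  intro z hz
  have key : ∀ w ∈ Ω, HasFDerivWithinAt (fun w => ρlim w - w)
      (0 : (Fin m → ℝ) →L[ℝ] (Fin m → ℝ)) Ω w := by
    intro w hw
    have hd : HasFDerivAt ρlim (fderiv ℝ ρlim w) w :=
      ((hdiff w hw).differentiableAt (hopen.mem_nhds hw)).hasFDerivAt
    rw [hId w hw] at hd
    have := hd.sub (hasFDerivAt_id w)
    simpa using this.hasFDerivWithinAt
  have hb := hconv.norm_image_sub_le_of_norm_hasFDerivWithin_le
    (f := fun w => ρlim w - w) (C := 0) key (fun w hw => by simp) hy₀ hz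
  have h0 : ρlim z - z = ρlim y₀ - y₀ := by
    have : ‖(ρlim z - z) - (ρlim y₀ - y₀)‖ ≤ 0 := by simpa using hb
    exact sub_eq_zero.mp (norm_le_zero_iff.mp this)
  have : ρlim z - z = 0 := by rw [h0, hfix0, sub_self]
  exact sub_eq_zero.mp this
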